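/- arXiv:1410.2420 — 2 statements merged into one kernel-verified Lean document; each statement's English description precedes it below -/
import Mathlib

section
/- Let p ≥ 5 be a prime and n ≥ 1 an even integer such that q = n·p + 1 is a prime number congruent to 1 or −1 modulo 5 (so that q splits in K and O_K/𝔮 has q elements for any prime ideal 𝔮 of O_K above q). Let a, b, c ∈ O_K satisfy a^p + b^p + c^p = 0, and let 𝔮 be a prime ideal of O_K above q such that v_𝔮(a·b·c) = 0. Then the polynomials X^n − 1 and (X+1)^n − 1 have a common root in the field O_K/𝔮; in particular q divides W_n. -/
open Polynomial

/-- `K = ℚ(√5)`, the real quadratic field obtained by adjoining `√5` to `ℚ`. -/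
noncomputable def K : IntermediateField ℚ ℝ := IntermediateField.adjoin ℚ {Real.sqrt 5}

/-- The Sylvester matrix of two polynomials `f, g` over `ℤ`, of size
`(g.natDegree + f.natDegree) × (g.natDegree + f.natDegree)`: the first
`g.natDegree` rows carry the (shifted) coefficients of `f` and the remaining
`f.natDegree` rows carry the (shifted) coefficients of `g`. -/
noncomputable def sylvester (f g : Polynomial ℤ) :
    Matrix (Fin (g.natDegree + f.natDegree)) (Fin (g.natDegree + f.natDegree)) ℤ :=
  Matrix.of fun i j =>
    if (i : ℕ) < g.natDegree then
      if (i : ℕ) ≤ (j : ℕ) ∧ (j : ℕ) ≤ (i : ℕ) + f.natDegree then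
        f.coeff (f.natDegree + i - j)
      else 0
    else
      if (i : ℕ) - g.natDegree ≤ (j : ℕ) ∧ (j : ℕ) ≤ (i : ℕ) - g.natDegree + g.natDegree then
        g.coeff (g.natDegree + ((i : ℕ) - g.natDegree) - j)
      else 0

/-- The resultant of two polynomials over `ℤ`: the determinant of their Sylvester matrix. -/
noncomputable def resultant (f g : Polynomial ℤ) : ℤ := (_root_.sylvester f g).det

/-- `W n` is the resultant of the polynomials `X ^ n - 1` and `(X + 1) ^ n - 1` in `ℤ[X]`. -/
noncomputable def W (n : ℕ) : ℤ := _root_.resultant (X ^ n - 1) ((X + 1) ^ n - 1)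

/-- `O_K`, the ring of integers of `K = ℚ(√5)`. -/
noncomputable abbrev OK : Type := NumberField.RingOfIntegers K


set_option maxHeartbeats 1000000
set_option synthInstance.maxHeartbeats 1000000

section Aux

open Finset

lemma sqrt5_irrational : Irrational (Real.sqrt 5) := by
  rw [show ((5:ℝ) = ((5:ℕ):ℝ)) by norm_num, irrational_sqrt_natCast_iff]
  intro ⟨r, hr⟩
  have : r ≤ 5 := by nlinarith
  interval_cases r <;> omega

lemma aeval_sqrt5 : (Polynomial.aeval (Real.sqrt 5)) (Polynomial.X ^ 2 - Polynomial.C (5:ℚ)) = 0 := by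
  simp only [map_sub, map_pow, Polynomial.aeval_X, Polynomial.aeval_C]
  rw [Real.sq_sqrt (by norm_num : (0:ℝ) ≤ 5)]
  norm_num

lemma minpoly_sqrt5 : minpoly ℚ (Real.sqrt 5) = Polynomial.X ^ 2 - Polynomial.C 5 := by
  symm
  apply minpoly.eq_of_irreducible_of_monic
  · apply X_pow_sub_C_irreducible_of_prime Nat.prime_two
    intro b hb
    apply sqrt5_irrational
    have hb' : ((b:ℝ)) ^ 2 = 5 := by exact_mod_cast congrArg (Rat.cast : ℚ → ℝ) hb
    have : Real.sqrt 5 = |(b:ℝ)| := by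
      rw [← hb', Real.sqrt_sq_eq_abs]
    rw [this, ← Rat.cast_abs]
    exact ⟨|b|, rfl⟩
  · exact aeval_sqrt5
  · exact Polynomial.monic_X_pow_sub_C _ (by norm_num)

lemma sqrt5_isIntegral : IsIntegral ℚ (Real.sqrt 5) :=
  ⟨Polynomial.X ^ 2 - Polynomial.C 5, Polynomial.monic_X_pow_sub_C _ (by norm_num), by
    have := aeval_sqrt5; simpa [Polynomial.aeval_def] using this⟩

noncomputable def pbK : PowerBasis ℚ K := IntermediateField.adjoin.powerBasis sqrt5_isIntegral

lemma pbK_dim : pbK.dim = 2 := by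
  simp [pbK, IntermediateField.adjoin.powerBasis, minpoly_sqrt5]

lemma minpoly_gen' : minpoly ℚ pbK.gen = Polynomial.X ^ 2 - Polynomial.C 5 := by
  rw [show pbK.gen = IntermediateField.AdjoinSimple.gen ℚ (Real.sqrt 5) from rfl]
  exact (IntermediateField.minpoly_gen (F := ℚ) (Real.sqrt 5)).trans minpoly_sqrt5

lemma finrank_K : Module.finrank ℚ K = 2 := by
  rw [pbK.finrank, pbK_dim]

lemma gen_sq : pbK.gen ^ 2 = 5 := by
  have h := minpoly.aeval ℚ pbK.gen
  rw [minpoly_gen'] at h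
  simp only [map_sub, map_pow, Polynomial.aeval_X, Polynomial.aeval_C] at h
  have : pbK.gen ^ 2 - 5 = 0 := by simpa using h
  linear_combination this

lemma trace_gen : Algebra.trace ℚ K pbK.gen = 0 := by
  rw [pbK.trace_gen_eq_nextCoeff_minpoly, minpoly_gen']
  rw [Polynomial.nextCoeff_of_natDegree_pos
    (by simp [Polynomial.natDegree_X_pow_sub_C] : 0 < (X^2 - Polynomial.C (5:ℚ)).natDegree)]
  simp [Polynomial.natDegree_X_pow_sub_C, Polynomial.coeff_X_pow]

lemma trace_one' : Algebra.trace ℚ K 1 = 2 := by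
  have := Algebra.trace_algebraMap (S := K) (1 : ℚ)
  simpa [finrank_K] using this

lemma trace_gen_sq : Algebra.trace ℚ K (pbK.gen ^ 2) = 10 := by
  rw [gen_sq]
  have := Algebra.trace_algebraMap (S := K) (5 : ℚ)
  rw [show ((5:K) = algebraMap ℚ K 5) by norm_num]
  rw [this, finrank_K]
  norm_num

lemma exists_rat_decomp (x : K) :
    ∃ r s : ℚ, x = algebraMap ℚ K r + algebraMap ℚ K s * pbK.gen := by
  let e := pbK.basis.reindex (finCongr pbK_dim)
  refine ⟨e.repr x 0, e.repr x 1, ?_⟩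
  have h := e.sum_repr x
  rw [Fin.sum_univ_two] at h
  have h0 : e 0 = 1 := by
    simp [e, Module.Basis.reindex_apply, pbK.basis_eq_pow]
  have h1 : e 1 = pbK.gen := by
    simp [e, Module.Basis.reindex_apply, pbK.basis_eq_pow]
  rw [h0, h1] at h
  conv_lhs => rw [← h]
  simp [Algebra.smul_def, mul_comm]

instance : FiniteDimensional ℚ K := pbK.finite

lemma gen_isIntegral : IsIntegral ℤ pbK.gen := by
  refine ⟨Polynomial.X ^ 2 - Polynomial.C 5, Polynomial.monic_X_pow_sub_C _ (by norm_num), ?_⟩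
  have : pbK.gen ^ 2 - 5 = 0 := by rw [gen_sq]; ring
  simpa [Polynomial.eval₂_sub, Polynomial.eval₂_pow] using this

lemma exists_int_decomp (x : K) (hx : IsIntegral ℤ x) :
    ∃ u v : ℤ, (10 : K) * x = algebraMap ℚ K u + algebraMap ℚ K v * pbK.gen := by
  obtain ⟨r, s, hrs⟩ := exists_rat_decomp x
  have htr : Algebra.trace ℚ K x = 2 * r := by
    rw [hrs, map_add]
    rw [show (algebraMap ℚ K s * pbK.gen) = s • pbK.gen by rw [Algebra.smul_def]]
    rw [map_smul, trace_gen]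
    rw [show (algebraMap ℚ K r) = r • (1:K) by rw [Algebra.smul_def, mul_one]]
    rw [map_smul, trace_one']
    simp [mul_comm]
  have htr2 : Algebra.trace ℚ K (x * pbK.gen) = 10 * s := by
    have : x * pbK.gen = r • pbK.gen + s • pbK.gen ^ 2 := by
      rw [hrs]; rw [Algebra.smul_def, Algebra.smul_def]; ring
    rw [this, map_add, map_smul, map_smul, trace_gen, trace_gen_sq]
    simp [mul_comm]
  have h1 : IsIntegral ℤ (Algebra.trace ℚ K x) := Algebra.isIntegral_trace hx
  have h2 : IsIntegral ℤ (Algebra.trace ℚ K (x * pbK.gen)) :=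
    Algebra.isIntegral_trace (hx.mul gen_isIntegral)
  obtain ⟨u₁, hu₁⟩ := IsIntegrallyClosed.isIntegral_iff.mp h1
  obtain ⟨v₁, hv₁⟩ := IsIntegrallyClosed.isIntegral_iff.mp h2
  refine ⟨5 * u₁, v₁, ?_⟩
  have hu : ((5 * u₁ : ℤ) : ℚ) = 10 * r := by
    have : (u₁ : ℚ) = 2 * r := by rw [← htr, ← hu₁]; simp [eq_comm]
    push_cast [this]; ring
  have hv : ((v₁ : ℤ) : ℚ) = 10 * s := by rw [← htr2, ← hv₁]; simp [eq_comm]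
  have : algebraMap ℚ K ((5 * u₁ : ℤ) : ℚ) + algebraMap ℚ K ((v₁ : ℤ) : ℚ) * pbK.gen
      = (10 : K) * x := by
    rw [hu, hv, hrs]
    rw [map_mul, map_mul]
    rw [show (algebraMap ℚ K (10 : ℚ)) = (10 : K) by norm_num]
    ring
  exact this.symm

noncomputable def S5 : OK := ⟨pbK.gen, gen_isIntegral⟩

lemma coe_S5 : algebraMap OK K S5 = pbK.gen := rfl

lemma S5_sq : S5 ^ 2 = 5 := by
  apply NumberField.RingOfIntegers.coe_injective
  rw [map_pow, coe_S5, gen_sq]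
  exact (map_ofNat _ 5).symm

lemma exists_int_decomp_OK (x : OK) :
    ∃ u v : ℤ, (10 : OK) * x = (u : OK) + (v : OK) * S5 := by
  obtain ⟨u, v, huv⟩ := exists_int_decomp (x : K) x.2
  refine ⟨u, v, NumberField.RingOfIntegers.coe_injective ?_⟩
  rw [map_mul, map_add, map_mul, coe_S5, map_intCast, map_intCast]
  rw [map_intCast (algebraMap ℚ K) u, map_intCast (algebraMap ℚ K) v] at huv
  rw [show (algebraMap OK K (10:OK)) = (10:K) from map_ofNat _ 10]
  exact huv

lemma five_square_mod (q : ℕ) [Fact q.Prime] (hq2 : q ≠ 2) (h5 : q % 5 = 1 ∨ q % 5 = 4) :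
    IsSquare (5 : ZMod q) := by
  haveI : Fact (Nat.Prime 5) := ⟨by norm_num⟩
  have h := ZMod.exists_sq_eq_prime_iff_of_mod_four_eq_one (p := 5) (q := q) (by norm_num) hq2
  have hsq : IsSquare ((q : ZMod 5)) := by
    have hq5 : ((q : ℕ) : ZMod 5) = ((q % 5 : ℕ) : ZMod 5) := (ZMod.natCast_mod q 5).symm
    rcases h5 with h' | h'
    · rw [hq5, h']
      refine ⟨1, ?_⟩
      norm_num
    · rw [hq5, h']
      refine ⟨2, ?_⟩
      norm_num
  have h2 := h.mp hsq
  simpa using h2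

lemma row_sum {F : Type*} [Field F] (n N : ℕ) (hN : N = n + n) (i' : ℕ) (hi' : i' < n)
    (h : Polynomial ℤ) (α : F)
    (hroot : ∑ k ∈ Finset.range (n+1), ((h.coeff k : ℤ) : F) * α ^ k = 0) :
    ∑ j ∈ Finset.range N,
      (if i' ≤ j ∧ j ≤ i' + n then ((h.coeff (n + i' - j) : ℤ) : F) else 0) * α ^ (N - 1 - j)
      = 0 := by
  have step1 : ∑ j ∈ Finset.range N,
      (if i' ≤ j ∧ j ≤ i' + n then ((h.coeff (n + i' - j) : ℤ) : F) else 0) * α ^ (N - 1 - j)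
      = ∑ j ∈ Finset.range N,
      (if i' ≤ j ∧ j ≤ i' + n then ((h.coeff (n + i' - j) : ℤ) : F) * α ^ (N - 1 - j) else 0) := by
    refine Finset.sum_congr rfl fun j _ => ?_
    split <;> simp
  rw [step1, ← Finset.sum_filter]
  have hfil : (Finset.range N).filter (fun j => i' ≤ j ∧ j ≤ i' + n) = Finset.Ico i' (i' + n + 1) := by
    ext j
    simp only [Finset.mem_filter, Finset.mem_range, Finset.mem_Ico]
    omega
  rw [hfil, Finset.sum_Ico_eq_sum_range]
  have hrange : i' + n + 1 - i' = n + 1 := by omega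
  rw [hrange]
  have step2 : ∀ m ∈ Finset.range (n+1),
      ((h.coeff (n + i' - (i' + m)) : ℤ) : F) * α ^ (N - 1 - (i' + m))
      = α ^ (n - 1 - i') * (((h.coeff (n - m) : ℤ) : F) * α ^ (n - m)) := by
    intro m hm
    rw [Finset.mem_range] at hm
    have h1 : n + i' - (i' + m) = n - m := by omega
    have h2 : N - 1 - (i' + m) = (n - 1 - i') + (n - m) := by omega
    rw [h1, h2, pow_add]
    ring
  rw [Finset.sum_congr rfl step2, ← Finset.mul_sum]
  have step3 : ∑ m ∈ Finset.range (n+1), (((h.coeff (n - m) : ℤ) : F) * α ^ (n - m))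
      = ∑ k ∈ Finset.range (n+1), (((h.coeff k : ℤ) : F) * α ^ k) := by
    have := Finset.sum_range_reflect (fun k => (((h.coeff k : ℤ) : F) * α ^ k)) (n+1)
    rw [← this]
    refine Finset.sum_congr rfl fun m hm => ?_
    rw [Finset.mem_range] at hm
    have : n + 1 - 1 - m = n - m := by omega
    rw [this]
  rw [step3, hroot, mul_zero]

lemma sum_coeff_eval {F : Type*} [Field F] {n : ℕ} (h : Polynomial ℤ) (hd : h.natDegree ≤ n)
    (α : F) : ∑ k ∈ Finset.range (n+1), ((h.coeff k : ℤ) : F) * α ^ k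
      = (h.map (Int.castRingHom F)).eval α := by
  rw [Polynomial.eval_eq_sum_range' (lt_of_le_of_lt (Polynomial.natDegree_map_le) (Nat.lt_succ_of_le hd))]
  refine Finset.sum_congr rfl fun k _ => ?_
  rw [Polynomial.coeff_map]
  rfl

lemma W_cast_zero {F : Type*} [Field F] {n : ℕ} (hn : 1 ≤ n) (α : F)
    (h1 : α ^ n = 1) (h2 : (α + 1) ^ n = 1) : ((W n : ℤ) : F) = 0 := by
  set f : Polynomial ℤ := X ^ n - 1 with hf
  set g : Polynomial ℤ := (X + 1) ^ n - 1 with hg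
  have hdf : f.natDegree = n := by
    rw [hf, ← Polynomial.C_1, Polynomial.natDegree_X_pow_sub_C]
  have hdg : g.natDegree = n := by
    rw [hg, ← Polynomial.C_1, Polynomial.natDegree_sub_C, Polynomial.natDegree_pow,
      Polynomial.natDegree_X_add_C, mul_one]
  have hNn : g.natDegree + f.natDegree = n + n := by rw [hdf, hdg]
  have hdet : ((W n : ℤ) : F) = ((_root_.sylvester f g).map (Int.cast : ℤ → F)).det := by
    rw [show ((W n : ℤ) : F) = (Int.castRingHom F) (W n) from rfl]
    rw [W, _root_.resultant, RingHom.map_det]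
    rfl
  rw [hdet]
  rw [← Matrix.exists_mulVec_eq_zero_iff]
  refine ⟨fun j => α ^ (g.natDegree + f.natDegree - 1 - (j : ℕ)), ?_, ?_⟩
  · intro hv
    have hlt : g.natDegree + f.natDegree - 1 < g.natDegree + f.natDegree := by omega
    have := congrFun hv ⟨g.natDegree + f.natDegree - 1, hlt⟩
    simp only [Nat.sub_self] at this
    rw [pow_zero] at this
    exact one_ne_zero this
  · have hrootf : ∑ k ∈ Finset.range (n+1), ((f.coeff k : ℤ) : F) * α ^ k = 0 := by
      rw [sum_coeff_eval f hdf.le α, hf]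
      simp only [Polynomial.map_sub, Polynomial.map_pow, Polynomial.map_X, Polynomial.map_one]
      simp [h1]
    have hrootg : ∑ k ∈ Finset.range (n+1), ((g.coeff k : ℤ) : F) * α ^ k = 0 := by
      rw [sum_coeff_eval g hdg.le α, hg]
      simp only [Polynomial.map_sub, Polynomial.map_pow, Polynomial.map_add, Polynomial.map_X,
        Polynomial.map_one]
      simp [h2]
    funext i
    rw [Matrix.mulVec, dotProduct]
    rcases lt_or_ge (i : ℕ) g.natDegree with hi | hi
    · have hterm : ∀ j : Fin (g.natDegree + f.natDegree),
          ((_root_.sylvester f g).map (Int.cast : ℤ → F)) i j * α ^ (g.natDegree + f.natDegree - 1 - (j:ℕ))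
          = (if (i:ℕ) ≤ (j:ℕ) ∧ (j:ℕ) ≤ (i:ℕ) + n then ((f.coeff (n + (i:ℕ) - (j:ℕ)) : ℤ) : F) else 0)
              * α ^ (g.natDegree + f.natDegree - 1 - (j:ℕ)) := by
        intro j
        rw [Matrix.map_apply, _root_.sylvester, Matrix.of_apply, if_pos hi, apply_ite (Int.cast : ℤ → F)]
        simp only [hdf, Int.cast_zero]
      simp only [hterm]
      rw [Fin.sum_univ_eq_sum_range (fun j =>
        (if (i:ℕ) ≤ j ∧ j ≤ (i:ℕ) + n then ((f.coeff (n + (i:ℕ) - j) : ℤ) : F) else 0)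
          * α ^ (g.natDegree + f.natDegree - 1 - j))]
      exact row_sum n _ hNn (i:ℕ) (by omega) f α hrootf
    · have hi2 : (i : ℕ) - g.natDegree < n := by
        have := i.isLt
        omega
      have hterm : ∀ j : Fin (g.natDegree + f.natDegree),
          ((_root_.sylvester f g).map (Int.cast : ℤ → F)) i j * α ^ (g.natDegree + f.natDegree - 1 - (j:ℕ))
          = (if (i:ℕ) - n ≤ (j:ℕ) ∧ (j:ℕ) ≤ ((i:ℕ) - n) + n then ((g.coeff (n + ((i:ℕ) - n) - (j:ℕ)) : ℤ) : F) else 0)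
              * α ^ (g.natDegree + f.natDegree - 1 - (j:ℕ)) := by
        intro j
        rw [Matrix.map_apply, _root_.sylvester, Matrix.of_apply, if_neg (by omega), apply_ite (Int.cast : ℤ → F)]
        simp only [hdg, Int.cast_zero]
      simp only [hterm]
      rw [Fin.sum_univ_eq_sum_range (fun j =>
        (if (i:ℕ) - n ≤ j ∧ j ≤ ((i:ℕ) - n) + n then ((g.coeff (n + ((i:ℕ) - n) - j) : ℤ) : F) else 0)
          * α ^ (g.natDegree + f.natDegree - 1 - j))]
      exact row_sum n _ hNn ((i:ℕ) - n) (by omega) g α hrootg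

end Aux

set_option maxHeartbeats 1000000 in
set_option synthInstance.maxHeartbeats 400000 in
/-- **Lemma 4 (key step).** Let `p ≥ 5` be prime, `n ≥ 1` even, and suppose
`q = n·p + 1` is a prime congruent to `±1 (mod 5)`.  Let `a, b, c ∈ O_K` with
`a^p + b^p + c^p = 0` and let `𝔮` be a prime ideal of `O_K` above `q` with
`v_𝔮(a·b·c) = 0`.  Then `X^n - 1` and `(X + 1)^n - 1` have a common root in
`O_K/𝔮`; in particular `q` divides `W n`. -/
theorem common_root_mod_q_of_good_reduction (p n : ℕ) (hp : p.Prime) (hp5 : 5 ≤ p)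
    (hn1 : 1 ≤ n) (hneven : n % 2 = 0)
    (hq : (n * p + 1).Prime) (hq5 : (n * p + 1) % 5 = 1 ∨ (n * p + 1) % 5 = 4)
    (a b c : OK) (hfermat : a ^ p + b ^ p + c ^ p = 0)
    (𝔮 : Ideal OK) (h𝔮 : 𝔮.IsPrime) (h𝔮q : ((n * p + 1 : ℕ) : OK) ∈ 𝔮)
    (habc : a * b * c ∉ 𝔮) :
    (∃ α : OK ⧸ 𝔮, α ^ n = 1 ∧ (α + (1 : OK ⧸ 𝔮)) ^ n = 1) ∧
      ((n * p + 1 : ℕ) : ℤ) ∣ W n := by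
  classical
  haveI := h𝔮
  set q : ℕ := n * p + 1 with hqdef
  haveI : Fact q.Prime := ⟨hq⟩
  haveI : NumberField K := ⟨⟩
  haveI : Nontrivial (OK ⧸ 𝔮) := Ideal.Quotient.nontrivial_iff.mpr h𝔮.ne_top
  have hn2 : 2 ≤ n := by omega
  have hq11 : 11 ≤ q := by
    have : 2 * 5 ≤ n * p := Nat.mul_le_mul hn2 hp5
    omega
  have hq10 : ¬ (q ∣ 10) := fun hd => by
    have := Nat.le_of_dvd (by norm_num) hd
    omega
  have hqzero : ((q : ℕ) : OK ⧸ 𝔮) = 0 := by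
    rw [← map_natCast (Ideal.Quotient.mk 𝔮)]
    exact Ideal.Quotient.eq_zero_iff_mem.mpr h𝔮q
  haveI hchar : CharP (OK ⧸ 𝔮) q := by
    have hd : ringChar (OK ⧸ 𝔮) ∣ q := ringChar.dvd hqzero
    rcases (Nat.dvd_prime hq).mp hd with h1 | h1
    · exact absurd h1 CharP.ringChar_ne_one
    · rw [← h1]; exact ringChar.charP _
  set φ : ZMod q →+* OK ⧸ 𝔮 := ZMod.castHom (dvd_refl q) (OK ⧸ 𝔮) with hφ
  have hφinj : Function.Injective φ := φ.injective
  -- the image of S5 is in the prime field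
  obtain ⟨z0, hz0⟩ := five_square_mod q (by omega) hq5
  have hT : ∃ w : ZMod q, Ideal.Quotient.mk 𝔮 S5 = φ w := by
    have hTsq : (Ideal.Quotient.mk 𝔮 S5) ^ 2 = 5 := by
      rw [← map_pow, S5_sq]
      exact map_ofNat _ 5
    have hφz : (φ z0) ^ 2 = 5 := by
      rw [← map_pow, show z0 ^ 2 = 5 from by rw [sq]; exact hz0.symm]
      exact map_ofNat _ 5
    have hsplit : (Ideal.Quotient.mk 𝔮 S5 - φ z0) * (Ideal.Quotient.mk 𝔮 S5 + φ z0) = 0 := by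
      have : (Ideal.Quotient.mk 𝔮 S5) ^ 2 - (φ z0) ^ 2 = 0 := by rw [hTsq, hφz]; ring
      linear_combination this
    rcases mul_eq_zero.mp hsplit with h | h
    · exact ⟨z0, by linear_combination h⟩
    · exact ⟨-z0, by rw [map_neg]; linear_combination h⟩
  obtain ⟨w, hw⟩ := hT
  -- every element of the residue field lies in the prime field
  have h10Z : ((10 : ZMod q)) ≠ 0 := by
    intro h
    have h' : (((10:ℕ) : ZMod q)) = 0 := by exact_mod_cast h
    exact hq10 ((ZMod.natCast_eq_zero_iff 10 q).mp h')
  have h10F : (10 : OK ⧸ 𝔮) ≠ 0 := by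
    have h10 : φ (10 : ZMod q) = (10 : OK ⧸ 𝔮) := map_ofNat _ 10
    rw [← h10]
    intro h
    exact h10Z (hφinj (by rw [h, map_zero]))
  have hrep : ∀ x : OK ⧸ 𝔮, ∃ z : ZMod q, x = φ z := by
    intro x
    obtain ⟨X, rfl⟩ := Ideal.Quotient.mk_surjective x
    obtain ⟨u, v, huv⟩ := exists_int_decomp_OK X
    refine ⟨(10 : ZMod q)⁻¹ * ((u : ZMod q) + (v : ZMod q) * w), ?_⟩
    have hmk10 : Ideal.Quotient.mk 𝔮 ((10 : OK) * X) = φ ((u : ZMod q) + (v : ZMod q) * w) := by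
      rw [huv, map_add, map_mul, map_add, map_mul, map_intCast φ, map_intCast φ]
      rw [map_intCast (Ideal.Quotient.mk 𝔮) u, map_intCast (Ideal.Quotient.mk 𝔮) v, hw]
    apply mul_left_cancel₀ h10F
    rw [show (10 : OK ⧸ 𝔮) * Ideal.Quotient.mk 𝔮 X = Ideal.Quotient.mk 𝔮 ((10 : OK) * X) from by
      rw [map_mul, map_ofNat]]
    rw [hmk10, show (10 : OK ⧸ 𝔮) = φ (10 : ZMod q) from (map_ofNat _ 10).symm, ← map_mul]
    congr 1
    rw [← mul_assoc, mul_inv_cancel₀ h10Z, one_mul]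
  -- the three elements are nonzero
  have hCne : Ideal.Quotient.mk 𝔮 c ≠ 0 := by
    intro h
    exact habc (Ideal.mul_mem_left _ _ (Ideal.Quotient.eq_zero_iff_mem.mp h))
  have hAne : Ideal.Quotient.mk 𝔮 a ≠ 0 := by
    intro h
    have ha : a ∈ 𝔮 := Ideal.Quotient.eq_zero_iff_mem.mp h
    exact habc (Ideal.mul_mem_right _ _ (Ideal.mul_mem_right _ _ ha))
  have hBne : Ideal.Quotient.mk 𝔮 b ≠ 0 := by
    intro h
    have hb : b ∈ 𝔮 := Ideal.Quotient.eq_zero_iff_mem.mp h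
    exact habc (Ideal.mul_mem_right _ _ (Ideal.mul_mem_left _ _ hb))
  obtain ⟨zA, hzA⟩ := hrep (Ideal.Quotient.mk 𝔮 a)
  obtain ⟨zB, hzB⟩ := hrep (Ideal.Quotient.mk 𝔮 b)
  obtain ⟨zC, hzC⟩ := hrep (Ideal.Quotient.mk 𝔮 c)
  have hzAne : zA ≠ 0 := fun h => hAne (by rw [hzA, h, map_zero])
  have hzBne : zB ≠ 0 := fun h => hBne (by rw [hzB, h, map_zero])
  have hzCne : zC ≠ 0 := fun h => hCne (by rw [hzC, h, map_zero])
  -- push the Fermat equation down to `ZMod q`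
  have heqz : zA ^ p + zB ^ p + zC ^ p = 0 := by
    apply hφinj
    rw [map_add, map_add, map_pow, map_pow, map_pow, ← hzA, ← hzB, ← hzC, map_zero]
    rw [← map_pow, ← map_pow, ← map_pow, ← map_add, ← map_add, hfermat, map_zero]
  set xz : ZMod q := zA * zC⁻¹ with hxzdef
  set yz : ZMod q := zB * zC⁻¹ with hyzdef
  have hxzne : xz ≠ 0 := mul_ne_zero hzAne (inv_ne_zero hzCne)
  have hyzne : yz ≠ 0 := mul_ne_zero hzBne (inv_ne_zero hzCne)
  have hkey : xz ^ p + yz ^ p + 1 = 0 := by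
    have hxC : xz ^ p * zC ^ p = zA ^ p := by
      rw [hxzdef, mul_pow, mul_assoc, ← mul_pow, inv_mul_cancel₀ hzCne, one_pow, mul_one]
    have hyC : yz ^ p * zC ^ p = zB ^ p := by
      rw [hyzdef, mul_pow, mul_assoc, ← mul_pow, inv_mul_cancel₀ hzCne, one_pow, mul_one]
    have hmul : (xz ^ p + yz ^ p + 1) * zC ^ p = zA ^ p + zB ^ p + zC ^ p := by
      rw [add_mul, add_mul, hxC, hyC, one_mul]
    rcases mul_eq_zero.mp (hmul.trans heqz) with h | h
    · exact h
    · exact absurd h (pow_ne_zero _ hzCne)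
  have heven : Even n := Nat.even_iff.mpr hneven
  have hfltx : (xz ^ p) ^ n = 1 := by
    rw [← pow_mul, show p * n = q - 1 from by rw [hqdef, Nat.add_sub_cancel]; exact Nat.mul_comm p n]
    exact ZMod.pow_card_sub_one_eq_one hxzne
  have hflty : (xz ^ p + 1) ^ n = 1 := by
    have hx1 : xz ^ p + 1 = -(yz ^ p) := by linear_combination hkey
    rw [hx1, heven.neg_pow, ← pow_mul, show p * n = q - 1 from by rw [hqdef, Nat.add_sub_cancel]; exact Nat.mul_comm p n]
    exact ZMod.pow_card_sub_one_eq_one hyzne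
  constructor
  · refine ⟨φ (xz ^ p), ?_, ?_⟩
    · rw [← map_pow, hfltx, map_one]
    · rw [show φ (xz ^ p) + 1 = φ (xz ^ p + 1) from by rw [map_add, map_one]]
      rw [← map_pow, hflty, map_one]
  · have hcast := W_cast_zero hn1 (xz ^ p) hfltx hflty
    exact_mod_cast (ZMod.intCast_zmod_eq_zero_iff_dvd (W n) q).mp hcast
end

section
/- Let A, B, C be elements of O_K with A + B + C = 0, A ≡ 1 (mod 4·O_K) and B ≡ u² + 2u (mod 4·O_K). Then C ≡ u + 2 (mod 4·O_K), and, denoting by v the valuation on O_K attached to the prime ideal 2·O_K, one has v(A² + A·B + B²) = v(A² + A·C + C²) = v(B² + B·C + C²) = 1. -/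
open Polynomial

lemma sqrt5_mem : Real.sqrt 5 ∈ K :=
  IntermediateField.subset_adjoin ℚ {Real.sqrt 5} rfl

/-- `(1 + √5)/2` as an element of `K`. -/
noncomputable def uK : K :=
  ⟨(1 + Real.sqrt 5) / 2,
    div_mem (add_mem (one_mem K) sqrt5_mem)
      (by exact_mod_cast SubfieldClass.ratCast_mem K 2)⟩

lemma uK_integral : IsIntegral ℤ uK := by
  have h : IsIntegral ℤ ((1 + Real.sqrt 5) / 2 : ℝ) := by
    refine ⟨X ^ 2 - X - 1, by monicity!, ?_⟩
    have h5 : Real.sqrt 5 ^ 2 = 5 := Real.sq_sqrt (by norm_num)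
    simp only [eval₂_sub, eval₂_pow, eval₂_X, eval₂_one]
    nlinarith [h5]
  rw [show ((1 + Real.sqrt 5) / 2 : ℝ) = algebraMap K ℝ uK from rfl] at h
  exact (isIntegral_algebraMap_iff (algebraMap K ℝ).injective).mp h

/-- `u = (1 + √5)/2` as an element of `O_K`; it satisfies `u ^ 2 = 1 + u`. -/
noncomputable def u : OK := ⟨uK, uK_integral⟩


lemma u_sq : u ^ 2 = 1 + u := by
  apply NumberField.RingOfIntegers.coe_injective
  push_cast
  apply Subtype.ext
  show ((1 + Real.sqrt 5)/2)^2 = 1 + (1 + Real.sqrt 5)/2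
  have h5 : Real.sqrt 5 ^ 2 = 5 := Real.sq_sqrt (by norm_num)
  nlinarith [h5]

lemma not_two_dvd_one : ¬ (2 : OK) ∣ 1 := by
  rintro ⟨x, hx⟩
  have hx' : (algebraMap OK K) 1 = algebraMap OK K (2 * x) := by rw [hx]
  rw [map_mul, map_one, map_ofNat] at hx'
  have hxx : algebraMap OK K x = algebraMap ℚ K (1/2) := by
    field_simp at hx' ⊢
    rw [map_div₀, map_one, map_ofNat]
    linear_combination (1/2 : K) * hx'.symm
  have hint := x.isIntegral_coe
  rw [hxx, isIntegral_algebraMap_iff (algebraMap ℚ K).injective] at hint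
  obtain ⟨n, hn⟩ := IsIntegrallyClosed.isIntegral_iff.mp hint
  have h2 : (2 * n : ℤ) = 1 := by
    have h1 : (n : ℚ) = 1/2 := hn
    exact_mod_cast (by linarith : (2:ℚ) * n = 1)
  omega

set_option maxHeartbeats 1000000 in
/-- **Remark after Lemma 3.** Let `A, B, C ∈ O_K` with `A + B + C = 0`,
`A ≡ 1 (mod 4·O_K)` and `B ≡ u² + 2u (mod 4·O_K)`.  Then `C ≡ u + 2 (mod 4·O_K)`
and, for the valuation `v` attached to the prime ideal `2·O_K` (so `v(x) = 1`
iff `2 ∣ x` and `4 ∤ x`), one has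
`v(A² + AB + B²) = v(A² + AC + C²) = v(B² + BC + C²) = 1`. -/
theorem remark_valuations (A B C : OK) (hsum : A + B + C = 0)
    (hA : (4 : OK) ∣ A - 1) (hB : (4 : OK) ∣ B - (u ^ 2 + 2 * u)) :
    ((4 : OK) ∣ C - (u + 2)) ∧
    ((2 : OK) ∣ A ^ 2 + A * B + B ^ 2 ∧ ¬ (2 : OK) ^ 2 ∣ A ^ 2 + A * B + B ^ 2) ∧
    ((2 : OK) ∣ A ^ 2 + A * C + C ^ 2 ∧ ¬ (2 : OK) ^ 2 ∣ A ^ 2 + A * C + C ^ 2) ∧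
    ((2 : OK) ∣ B ^ 2 + B * C + C ^ 2 ∧ ¬ (2 : OK) ^ 2 ∣ B ^ 2 + B * C + C ^ 2) := by
  obtain ⟨a, ha⟩ := hA
  obtain ⟨b, hb⟩ := hB
  have hu := u_sq
  have huu : u * (u - 1) = 1 := by linear_combination hu
  have hC : C = -A - B := by linear_combination hsum
  subst hC
  have hA2 : A = 1 + 4*a := by linear_combination ha
  subst hA2
  have hB2 : B = u^2 + 2*u + 4*b := by linear_combination hb
  subst hB2
  set s : OK := 3 + 4*u + 3*b + 6*b*u + 4*b^2 + 3*a + 3*a*u + 4*a*b + 4*a^2 with hs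
  have main : ∀ e : OK, e = 2*u + 4*s → ((2:OK) ∣ e ∧ ¬ (2:OK)^2 ∣ e) := by
    rintro e rfl
    refine ⟨⟨u + 2*s, by ring⟩, ?_⟩
    rintro ⟨y, hy⟩
    have h2u : u = 2 * (y - s) := by
      have h2 : (2:OK) * u = 2 * (2*(y - s)) := by linear_combination hy
      exact mul_left_cancel₀ two_ne_zero h2
    exact not_two_dvd_one ⟨(y - s) * (u - 1), by linear_combination (u-1) * h2u - huu⟩
  refine ⟨⟨-1 - u - b - a, by linear_combination (-1 : OK) * hu⟩,
    main _ (by linear_combination (11 + 5*u + u^2 + 8*b + 4*a) * hu),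
    main _ (by linear_combination (11 + 5*u + u^2 + 8*b + 4*a) * hu),
    main _ (by linear_combination (11 + 5*u + u^2 + 8*b + 4*a) * hu)⟩
end
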